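/- arXiv:hep-th/0406190 — 3 statements merged into one kernel-verified Lean document; each statement's English description precedes it below -/
import Mathlib

section
/- Let Q < P be positive integers and η = iπQ/P. Let λ1,…,λP ∈ ℂ satisfy sinh(λ_{j+1} − λ_j + η) = 0 for j = 1,…,P, with the cyclic convention λ_{P+1} := λ_1. Then for every μ ∈ ℂ such that sinh(μ−λj) ≠ 0, sinh(μ−λj+η) ≠ 0 and sinh(λj−μ+η) ≠ 0 for all j, one has Σ_{j=1}^{P} t(μ,λj) = 0 and Σ_{j=1}^{P} t(λj,μ) = 0. -/
open Complex Matrix BigOperators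

noncomputable section

/-- Spin configurations of an `M`-site chain: the index set of the basis of `H = (ℂ²)^{⊗M}`. -/
abbrev Spins (M : ℕ) := Fin M → Fin 2

/-- The XXZ R-matrix `R(λ)` on `ℂ² ⊗ ℂ²` (with anisotropy parameter `η`). -/
def Rmat (η lam : ℂ) : Matrix (Fin 2 × Fin 2) (Fin 2 × Fin 2) ℂ :=
  fun p q =>
    if p = q then (if p.1 = p.2 then Complex.sinh (lam + η) else Complex.sinh lam)
    else if p.1 = q.2 ∧ p.2 = q.1 then Complex.sinh η else 0

/-- The L-operator `L_m(λ) = R_{0m}(λ - ξ_m)` acting on `ℂ² ⊗ H`. -/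
def Lop (M : ℕ) (η : ℂ) (ξ : Fin M → ℂ) (m : Fin M) (lam : ℂ) :
    Matrix (Fin 2 × Spins M) (Fin 2 × Spins M) ℂ :=
  fun p q => Rmat η (lam - ξ m) (p.1, p.2 m) (q.1, q.2 m) *
    (if ∀ k, k ≠ m → p.2 k = q.2 k then 1 else 0)

/-- The monodromy matrix `T(λ) = L_M(λ) ⋯ L_2(λ) L_1(λ)` on `ℂ² ⊗ H`. -/
def Tmono (M : ℕ) (η : ℂ) (ξ : Fin M → ℂ) (lam : ℂ) :
    Matrix (Fin 2 × Spins M) (Fin 2 × Spins M) ℂ :=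
  ((List.ofFn (fun m : Fin M => Lop M η ξ m lam)).reverse).prod

/-- The operator `A(λ)` on `H`. -/
def Aop (M : ℕ) (η : ℂ) (ξ : Fin M → ℂ) (lam : ℂ) : Matrix (Spins M) (Spins M) ℂ :=
  fun s t => Tmono M η ξ lam (0, s) (0, t)

/-- The operator `B(λ)` on `H`. -/
def Bop (M : ℕ) (η : ℂ) (ξ : Fin M → ℂ) (lam : ℂ) : Matrix (Spins M) (Spins M) ℂ :=
  fun s t => Tmono M η ξ lam (0, s) (1, t)

/-- The operator `C(λ)` on `H`. -/
def Cop (M : ℕ) (η : ℂ) (ξ : Fin M → ℂ) (lam : ℂ) : Matrix (Spins M) (Spins M) ℂ :=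
  fun s t => Tmono M η ξ lam (1, s) (0, t)

/-- The operator `D(λ)` on `H`. -/
def Dop (M : ℕ) (η : ℂ) (ξ : Fin M → ℂ) (lam : ℂ) : Matrix (Spins M) (Spins M) ℂ :=
  fun s t => Tmono M η ξ lam (1, s) (1, t)

/-- The twisted transfer matrix `𝒯_κ(μ) = A(μ) + κ D(μ)`. -/
def transferK (M : ℕ) (η : ℂ) (ξ : Fin M → ℂ) (κ : ℂ) (μ : ℂ) : Matrix (Spins M) (Spins M) ℂ :=
  Aop M η ξ μ + κ • Dop M η ξ μ

/-- The transfer matrix `𝒯(μ) = A(μ) + D(μ)`. -/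
def transfer (M : ℕ) (η : ℂ) (ξ : Fin M → ℂ) (μ : ℂ) : Matrix (Spins M) (Spins M) ℂ :=
  transferK M η ξ 1 μ

/-- The reference state `|0⟩` with all spins up. -/
def vac (M : ℕ) : Spins M → ℂ := fun s => if s = fun _ => (0 : Fin 2) then 1 else 0

/-- `⟨0| X |0⟩`. -/
def expectVac {M : ℕ} (X : Matrix (Spins M) (Spins M) ℂ) : ℂ :=
  dotProduct (vac M) (X.mulVec (vac M))

/-- `B(λ_1) ⋯ B(λ_N)`. -/
def Bprod (M : ℕ) (η : ℂ) (ξ : Fin M → ℂ) {N : ℕ} (lam : Fin N → ℂ) :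
    Matrix (Spins M) (Spins M) ℂ :=
  (List.ofFn (fun j : Fin N => Bop M η ξ (lam j))).prod

/-- `C(λ_1) ⋯ C(λ_N)`. -/
def Cprod (M : ℕ) (η : ℂ) (ξ : Fin M → ℂ) {N : ℕ} (lam : Fin N → ℂ) :
    Matrix (Spins M) (Spins M) ℂ :=
  (List.ofFn (fun j : Fin N => Cop M η ξ (lam j))).prod

/-- `a(λ) = ∏_a sinh(λ - ξ_a + η)`. -/
def aF (M : ℕ) (η : ℂ) (ξ : Fin M → ℂ) (lam : ℂ) : ℂ := ∏ a, Complex.sinh (lam - ξ a + η)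

/-- `d(λ) = ∏_a sinh(λ - ξ_a)`. -/
def dF (M : ℕ) (ξ : Fin M → ℂ) (lam : ℂ) : ℂ := ∏ a, Complex.sinh (lam - ξ a)

/-- `Y_κ(μ|{λ})`. -/
def Yk (M : ℕ) (η : ℂ) (ξ : Fin M → ℂ) (κ : ℂ) {N : ℕ} (lam : Fin N → ℂ) (μ : ℂ) : ℂ :=
  aF M η ξ μ * ∏ k, Complex.sinh (lam k - μ + η) +
    κ * dF M ξ μ * ∏ k, Complex.sinh (lam k - μ - η)

/-- `Y_κ(λ_j|{λ})` regarded as a function of all the variables `λ_1, …, λ_N`. -/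
def YFull (M : ℕ) (η : ℂ) (ξ : Fin M → ℂ) (κ : ℂ) {N : ℕ} (v : Fin N → ℂ) (j : Fin N) : ℂ :=
  Yk M η ξ κ v (v j)

/-- The eigenvalue `τ_κ(μ|{λ})` of the twisted transfer matrix. -/
def tauK (M : ℕ) (η : ℂ) (ξ : Fin M → ℂ) (κ : ℂ) {N : ℕ} (lam : Fin N → ℂ) (μ : ℂ) : ℂ :=
  aF M η ξ μ * ∏ k, (Complex.sinh (lam k - μ + η) / Complex.sinh (lam k - μ)) +
    κ * dF M ξ μ * ∏ k, (Complex.sinh (μ - lam k + η) / Complex.sinh (μ - lam k))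

/-- `t(λ,μ) = sinh η / (sinh(λ-μ) sinh(λ-μ+η))`. -/
def tfun (η lam μ : ℂ) : ℂ :=
  Complex.sinh η / (Complex.sinh (lam - μ) * Complex.sinh (lam - μ + η))

/-- The matrix `Ω_κ({λ},{μ}|{ν})`. -/
def Omega (M : ℕ) (η : ℂ) (ξ : Fin M → ℂ) (κ : ℂ) {n n' : ℕ}
    (lam : Fin n → ℂ) (mu : Fin n → ℂ) (nu : Fin n' → ℂ) : Matrix (Fin n) (Fin n) ℂ :=
  fun j k =>
    aF M η ξ (mu k) * tfun η (lam j) (mu k) * ∏ a, Complex.sinh (nu a - mu k + η) -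
      κ * dF M ξ (mu k) * tfun η (mu k) (lam j) * ∏ a, Complex.sinh (nu a - mu k - η)

/-- Pauli matrix `σ^x`. -/
def sigmaX : Matrix (Fin 2) (Fin 2) ℂ := !![0, 1; 1, 0]
/-- Pauli matrix `σ^y`. -/
def sigmaY : Matrix (Fin 2) (Fin 2) ℂ := !![0, -Complex.I; Complex.I, 0]
/-- Pauli matrix `σ^z`. -/
def sigmaZ : Matrix (Fin 2) (Fin 2) ℂ := !![1, 0; 0, -1]

/-- The local operator acting as `P` on the `m`-th site and as identity elsewhere. -/
def pauliAt (M : ℕ) (P : Matrix (Fin 2) (Fin 2) ℂ) (m : Fin M) : Matrix (Spins M) (Spins M) ℂ :=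
  fun s t => P (s m) (t m) * (if ∀ k, k ≠ m → s k = t k then 1 else 0)

/-- The generating operator `Q^κ_{i,m} = ∏_{n=i}^{m} ((1+κ)/2 + ((1-κ)/2) σ^z_n)`
(sites are 1-based: site `n` is the tensor factor of index `n-1`). -/
def Qop (M : ℕ) (κ : ℂ) (i m : ℕ) : Matrix (Spins M) (Spins M) ℂ :=
  (((Finset.univ.filter (fun n : Fin M => i ≤ n.val + 1 ∧ n.val + 1 ≤ m)).sort (· ≤ ·)).map
    (fun n => ((1 + κ)/2) • (1 : Matrix (Spins M) (Spins M) ℂ) +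
      ((1 - κ)/2) • pauliAt M sigmaZ n)).prod

/-- Cyclic successor on `Fin M`. -/
def cyc {M : ℕ} (m : Fin M) : Fin M := ⟨(m.val + 1) % M, Nat.mod_lt _ m.pos⟩


lemma coth_eq (a b : ℂ) (ha : Complex.sinh a ≠ 0) (hb : Complex.sinh b ≠ 0)
    (hab : Complex.sinh (a - b) = 0) :
    Complex.cosh a / Complex.sinh a = Complex.cosh b / Complex.sinh b := by
  have h := Complex.sinh_sub a b
  rw [hab] at h
  field_simp
  linear_combination h

lemma tfun_split (e x : ℂ) (hx : Complex.sinh x ≠ 0) (hxe : Complex.sinh (x + e) ≠ 0) :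
    Complex.sinh e / (Complex.sinh x * Complex.sinh (x + e)) =
      Complex.cosh x / Complex.sinh x - Complex.cosh (x + e) / Complex.sinh (x + e) := by
  have h := Complex.sinh_sub (x + e) x
  rw [add_sub_cancel_left] at h
  field_simp
  linear_combination h

lemma cyc_bij {M : ℕ} : Function.Bijective (cyc (M := M)) := by
  rw [Fintype.bijective_iff_injective_and_card]
  refine ⟨fun a b h => ?_, rfl⟩
  have ha := a.isLt
  have hb := b.isLt
  have ea : (a.val + 1) % M = if a.val + 1 = M then 0 else a.val + 1 := by
    split
    · simp [*]
    · exact Nat.mod_eq_of_lt (by omega)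
  have eb : (b.val + 1) % M = if b.val + 1 = M then 0 else b.val + 1 := by
    split
    · simp [*]
    · exact Nat.mod_eq_of_lt (by omega)
  simp only [cyc, Fin.ext_iff, ea, eb] at h ⊢
  split at h <;> split at h <;> omega


/-- At a root of unity (`η = iπQ/P`), the sums of `t(μ,λ_j)` and `t(λ_j,μ)` over a `P`-string
`{λ_1,…,λ_P}` vanish. -/
theorem string_sums_vanish (Q P : ℕ) (hQ : 0 < Q) (hQP : Q < P) (η : ℂ)
    (hη : η = Complex.I * Real.pi * Q / P)
    (lam : Fin P → ℂ)
    (hstring : ∀ j : Fin P, Complex.sinh (lam (cyc j) - lam j + η) = 0)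
    (μ : ℂ)
    (h1 : ∀ j : Fin P, Complex.sinh (μ - lam j) ≠ 0)
    (h2 : ∀ j : Fin P, Complex.sinh (μ - lam j + η) ≠ 0)
    (h3 : ∀ j : Fin P, Complex.sinh (lam j - μ + η) ≠ 0) :
    (∑ j : Fin P, tfun η μ (lam j) = 0) ∧ (∑ j : Fin P, tfun η (lam j) μ = 0) := by
  have hbij := cyc_bij (M := P)
  have h1' : ∀ j : Fin P, Complex.sinh (lam j - μ) ≠ 0 := by
    intro j hz
    apply h1 j
    have e : μ - lam j = -(lam j - μ) := by ring
    rw [e, Complex.sinh_neg, hz, neg_zero]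
  constructor
  · have split : ∀ j : Fin P, tfun η μ (lam j) =
        Complex.cosh (μ - lam j) / Complex.sinh (μ - lam j) -
          Complex.cosh (μ - lam j + η) / Complex.sinh (μ - lam j + η) := fun j =>
      tfun_split η (μ - lam j) (h1 j) (h2 j)
    simp only [split, Finset.sum_sub_distrib]
    have hmatch : ∀ j : Fin P, Complex.cosh (μ - lam (cyc j)) / Complex.sinh (μ - lam (cyc j)) =
        Complex.cosh (μ - lam j + η) / Complex.sinh (μ - lam j + η) := by
      intro j
      apply coth_eq _ _ (h1 (cyc j)) (h2 j)
      have e : μ - lam (cyc j) - (μ - lam j + η) = -(lam (cyc j) - lam j + η) := by ring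
      rw [e, Complex.sinh_neg, hstring j, neg_zero]
    have key : ∑ j : Fin P, Complex.cosh (μ - lam j + η) / Complex.sinh (μ - lam j + η) =
        ∑ j : Fin P, Complex.cosh (μ - lam j) / Complex.sinh (μ - lam j) := by
      rw [← Fintype.sum_bijective cyc hbij
        (fun j => Complex.cosh (μ - lam (cyc j)) / Complex.sinh (μ - lam (cyc j)))
        (fun j => Complex.cosh (μ - lam j) / Complex.sinh (μ - lam j)) (fun j => rfl)]
      exact (Finset.sum_congr rfl (fun j _ => hmatch j)).symm
    rw [key]
    ring
  · have split : ∀ j : Fin P, tfun η (lam j) μ =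
        Complex.cosh (lam j - μ) / Complex.sinh (lam j - μ) -
          Complex.cosh (lam j - μ + η) / Complex.sinh (lam j - μ + η) := fun j =>
      tfun_split η (lam j - μ) (h1' j) (h3 j)
    simp only [split, Finset.sum_sub_distrib]
    have hmatch : ∀ j : Fin P, Complex.cosh (lam (cyc j) - μ + η) / Complex.sinh (lam (cyc j) - μ + η) =
        Complex.cosh (lam j - μ) / Complex.sinh (lam j - μ) := by
      intro j
      apply coth_eq _ _ (h3 (cyc j)) (h1' j)
      have e : lam (cyc j) - μ + η - (lam j - μ) = lam (cyc j) - lam j + η := by ring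
      rw [e, hstring j]
    have key : ∑ j : Fin P, Complex.cosh (lam j - μ + η) / Complex.sinh (lam j - μ + η) =
        ∑ j : Fin P, Complex.cosh (lam j - μ) / Complex.sinh (lam j - μ) := by
      rw [← Fintype.sum_bijective cyc hbij
        (fun j => Complex.cosh (lam (cyc j) - μ + η) / Complex.sinh (lam (cyc j) - μ + η))
        (fun j => Complex.cosh (lam j - μ + η) / Complex.sinh (lam j - μ + η)) (fun j => rfl)]
      exact Finset.sum_congr rfl (fun j _ => hmatch j)
    rw [key]
    ring


end
end

section
/- Let Q < P be positive integers, η = iπQ/P, κ ∈ ℂ, and n ≥ P. Let λ1,…,λn, μ1,…,μn ∈ ℂ satisfy sinh(λj−μk) ≠ 0, sinh(λj−μk+η) ≠ 0 and sinh(μk−λj+η) ≠ 0 for all j,k. Suppose there exist P distinct indices a1,…,aP ∈ {1,…,n} such that sinh(λ_{a_{j+1}} − λ_{a_j} + η) = 0 for j = 1,…,P, with the cyclic convention λ_{a_{P+1}} := λ_{a_1}. Then det_n Ω_κ({λ},{μ}|{λ}) = 0. -/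
open Complex Matrix BigOperators

noncomputable section

lemma ratio_shift (μ x y η : ℂ) (hz : Complex.sinh (y - x + η) = 0)
    (hy : Complex.sinh (y - μ + η) ≠ 0) :
    Complex.cosh (y - μ + η) / Complex.sinh (y - μ + η)
      = Complex.cosh (x - μ) / Complex.sinh (x - μ) := by
  have e : y - μ + η = (x - μ) + (y - x + η) := by ring
  have hy' : Complex.sinh (x - μ) * Complex.cosh (y - x + η) ≠ 0 := by
    rw [e, Complex.sinh_add, hz, mul_zero, add_zero] at hy; exact hy
  have hs := left_ne_zero_of_mul hy'
  have hch := right_ne_zero_of_mul hy'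
  rw [e, Complex.sinh_add, Complex.cosh_add, hz, mul_zero, add_zero, mul_zero, add_zero]
  field_simp

lemma ratio_shift' (μ x y η : ℂ) (hz : Complex.sinh (y - x + η) = 0)
    (hy : Complex.sinh (y - μ) ≠ 0) :
    Complex.cosh (y - μ) / Complex.sinh (y - μ)
      = Complex.cosh (x - μ - η) / Complex.sinh (x - μ - η) := by
  have e : y - μ = (x - μ - η) + (y - x + η) := by ring
  have hy' : Complex.sinh (x - μ - η) * Complex.cosh (y - x + η) ≠ 0 := by
    rw [e, Complex.sinh_add, hz, mul_zero, add_zero] at hy; exact hy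
  have hs := left_ne_zero_of_mul hy'
  have hch := right_ne_zero_of_mul hy'
  rw [e, Complex.sinh_add, Complex.cosh_add, hz, mul_zero, add_zero, mul_zero, add_zero]
  field_simp

lemma omega_entry_split (η x μ A D κ : ℂ)
    (h0 : Complex.sinh (x - μ) ≠ 0) (hp : Complex.sinh (x - μ + η) ≠ 0)
    (hm : Complex.sinh (x - μ - η) ≠ 0) :
    A * tfun η x μ - κ * D * tfun η μ x
      = (A + κ * D) * (Complex.cosh (x - μ) / Complex.sinh (x - μ))
        - A * (Complex.cosh (x - μ + η) / Complex.sinh (x - μ + η))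
        - κ * D * (Complex.cosh (x - μ - η) / Complex.sinh (x - μ - η)) := by
  have hη1 : Complex.sinh η = Complex.sinh (x - μ + η) * Complex.cosh (x - μ)
      - Complex.cosh (x - μ + η) * Complex.sinh (x - μ) := by
    rw [← Complex.sinh_sub]; congr 1; ring
  have hη2 : Complex.sinh η = Complex.sinh (x - μ) * Complex.cosh (x - μ - η)
      - Complex.cosh (x - μ) * Complex.sinh (x - μ - η) := by
    rw [← Complex.sinh_sub]; congr 1; ring
  have hmx : Complex.sinh (μ - x) = -Complex.sinh (x - μ) := by
    rw [← Complex.sinh_neg]; congr 1; ring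
  have hmx2 : Complex.sinh (μ - x + η) = -Complex.sinh (x - μ - η) := by
    rw [← Complex.sinh_neg]; congr 1; ring
  have e1 : Complex.sinh η / (Complex.sinh (x - μ) * Complex.sinh (x - μ + η))
      = Complex.cosh (x - μ) / Complex.sinh (x - μ)
        - Complex.cosh (x - μ + η) / Complex.sinh (x - μ + η) := by
    rw [hη1]; field_simp
  have e2 : Complex.sinh η / (Complex.sinh (x - μ) * Complex.sinh (x - μ - η))
      = Complex.cosh (x - μ - η) / Complex.sinh (x - μ - η)
        - Complex.cosh (x - μ) / Complex.sinh (x - μ) := by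
    rw [hη2]; field_simp
  unfold tfun
  rw [hmx, hmx2, neg_mul_neg, e1, e2]
  ring

lemma cyc_bijective {P : ℕ} (hP : 0 < P) : Function.Bijective (cyc (M := P)) := by
  haveI : NeZero P := ⟨hP.ne'⟩
  have h : (cyc (M := P)) = fun m => m + 1 := by
    funext m
    simp only [cyc, Fin.ext_iff, Fin.add_def, Fin.val_one']
    exact (Nat.add_mod_mod _ _ _).symm
  rw [h]
  exact (Equiv.addRight (1 : Fin P)).bijective


/-- At a root of unity (`η = iπQ/P`), if `{λ}` contains a `P`-string then
`det Ω_κ({λ},{μ}|{λ}) = 0`. -/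
theorem det_Omega_vanishes_on_string (M : ℕ) (ξ : Fin M → ℂ) (Q P : ℕ)
    (hQ : 0 < Q) (hQP : Q < P) (η : ℂ) (hη : η = Complex.I * Real.pi * Q / P)
    (κ : ℂ) (n : ℕ) (hn : P ≤ n) (lam mu : Fin n → ℂ)
    (h1 : ∀ j k : Fin n, Complex.sinh (lam j - mu k) ≠ 0)
    (h2 : ∀ j k : Fin n, Complex.sinh (lam j - mu k + η) ≠ 0)
    (h3 : ∀ j k : Fin n, Complex.sinh (mu k - lam j + η) ≠ 0)
    (a : Fin P → Fin n) (ha : Function.Injective a)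
    (hstring : ∀ j : Fin P, Complex.sinh (lam (a (cyc j)) - lam (a j) + η) = 0) :
    (Omega M η ξ κ lam mu lam).det = 0 := by
  classical
  have hP : 0 < P := hQ.trans hQP
  rw [← Matrix.exists_vecMul_eq_zero_iff]
  set S : Finset (Fin n) := Finset.image a Finset.univ with hS
  refine ⟨fun i => if i ∈ S then (1 : ℂ) else 0, ?_, ?_⟩
  · intro h
    have h0 := congrFun h (a ⟨0, hP⟩)
    simp [hS] at h0
  · funext k
    have hsum : ∀ (i : Fin n), (if i ∈ S then (1 : ℂ) else 0) * Omega M η ξ κ lam mu lam i k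
        = (if i ∈ S then Omega M η ξ κ lam mu lam i k else 0) := by
      intro i; split <;> simp
    show (Matrix.vecMul _ _) k = 0
    rw [Matrix.vecMul, dotProduct]
    simp only [hsum]
    rw [Finset.sum_ite_mem, Finset.univ_inter, hS,
      Finset.sum_image (fun x _ y _ h => ha h)]
    -- now the analytic core
    set μ := mu k with hμ
    set A : ℂ := aF M η ξ μ * ∏ b, Complex.sinh (lam b - μ + η) with hA
    set D : ℂ := dF M ξ μ * ∏ b, Complex.sinh (lam b - μ - η) with hD
    have hm : ∀ j : Fin n, Complex.sinh (lam j - μ - η) ≠ 0 := by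
      intro j hc
      apply h3 j k
      rw [show mu k - lam j + η = -(lam j - mu k - η) by ring, Complex.sinh_neg]
      rw [hμ] at hc
      rw [hc, neg_zero]
    have hrow : ∀ j : Fin P, Omega M η ξ κ lam mu lam (a j) k
        = (A + κ * D) * (Complex.cosh (lam (a j) - μ) / Complex.sinh (lam (a j) - μ))
          - A * (Complex.cosh (lam (a j) - μ + η) / Complex.sinh (lam (a j) - μ + η))
          - κ * D * (Complex.cosh (lam (a j) - μ - η) / Complex.sinh (lam (a j) - μ - η)) := by
      intro j
      rw [← omega_entry_split η (lam (a j)) μ A D κ (h1 (a j) k) (h2 (a j) k) (hm (a j))]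
      simp only [Omega, hA, hD, hμ]
      ring
    simp only [hrow]
    have hbij := cyc_bijective hP
    have hSg : ∑ j : Fin P,
        Complex.cosh (lam (a j) - μ + η) / Complex.sinh (lam (a j) - μ + η)
        = ∑ j : Fin P, Complex.cosh (lam (a j) - μ) / Complex.sinh (lam (a j) - μ) := by
      rw [← Function.Bijective.sum_comp hbij
        (fun j => Complex.cosh (lam (a j) - μ + η) / Complex.sinh (lam (a j) - μ + η))]
      exact Finset.sum_congr rfl fun j _ =>
        ratio_shift μ (lam (a j)) (lam (a (cyc j))) η (hstring j) (by rw [hμ]; exact h2 (a (cyc j)) k)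
    have hSh : ∑ j : Fin P,
        Complex.cosh (lam (a j) - μ - η) / Complex.sinh (lam (a j) - μ - η)
        = ∑ j : Fin P, Complex.cosh (lam (a j) - μ) / Complex.sinh (lam (a j) - μ) := by
      rw [← Function.Bijective.sum_comp hbij
        (fun j => Complex.cosh (lam (a j) - μ) / Complex.sinh (lam (a j) - μ))]
      exact (Finset.sum_congr rfl fun j _ =>
        (ratio_shift' μ (lam (a j)) (lam (a (cyc j))) η (hstring j)
          (by rw [hμ]; exact h1 (a (cyc j)) k))).symm
    rw [Finset.sum_sub_distrib, Finset.sum_sub_distrib, ← Finset.mul_sum, ← Finset.mul_sum,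
      ← Finset.mul_sum, hSg, hSh]
    ring


end
end

section
/- Let κ ∈ ℂ, N ≥ 1, and let μ1,…,μN ∈ ℂ with sinh(μa−μb) ≠ 0 for a ≠ b, and λ1,…,λN ∈ ℂ such that sinh(μk−λj) ≠ 0, sinh(μk−λj+η) ≠ 0 and sinh(λj−μk+η) ≠ 0 for all j,k. Define vk = ∏_{a=1}^{N} sinh(μk−λa) / ∏_{a≠k} sinh(μk−μa). Then for every j ∈ {1,…,N}: Σ_{k=1}^{N} vk · (Ω_κ)_{kj}({μ},{λ}|{μ}) = Y_κ(λj|{λ}). In particular, if λ1,…,λN satisfy the Bethe equations Y_1(λj|{λ}) = 0 for all j, then Σ_{k=1}^{N} vk · (Ω_κ)_{kj}({μ},{λ}|{μ}) = (1−κ) a(λj) ∏_{a=1}^{N} sinh(λa−λj+η). -/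
open Complex Matrix BigOperators

noncomputable section

open Polynomial in
lemma lemA0 {N : ℕ} (x l : Fin N → ℂ) (hx : Function.Injective x) (Z : ℂ) :
    ∑ k, (∏ a, (x k - l a)) *
        ∏ a ∈ Finset.univ.erase k, ((Z - x a) / (x k - x a)) =
      (∏ a, (Z - l a)) - ∏ a, (Z - x a) := by
  classical
  rcases Nat.eq_zero_or_pos N with hN | hN
  · subst hN; simp
  set P : ℂ[X] := ∏ a : Fin N, (X - C (l a)) with hP
  set Q : ℂ[X] := ∏ a : Fin N, (X - C (x a)) with hQ
  have hPm : P.Monic := monic_prod_of_monic _ _ fun a _ => monic_X_sub_C _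
  have hQm : Q.Monic := monic_prod_of_monic _ _ fun a _ => monic_X_sub_C _
  have hPd : P.degree = (N : ℕ) := by
    rw [Polynomial.degree_eq_natDegree hPm.ne_zero]
    norm_cast
    rw [hP, natDegree_prod_of_monic _ _ fun a _ => monic_X_sub_C _]
    simp
  have hQd : Q.degree = (N : ℕ) := by
    rw [Polynomial.degree_eq_natDegree hQm.ne_zero]
    norm_cast
    rw [hQ, natDegree_prod_of_monic _ _ fun a _ => monic_X_sub_C _]
    simp
  have hdeg : (P - Q).degree < ((Finset.univ : Finset (Fin N)).card : ℕ) := by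
    rw [Finset.card_univ, Fintype.card_fin]
    rcases eq_or_ne P Q with h | h
    · rw [h, sub_self, degree_zero]
      exact_mod_cast WithBot.bot_lt_coe _
    · have := degree_sub_lt (hPd.trans hQd.symm) hPm.ne_zero
        (by rw [hPm.leadingCoeff, hQm.leadingCoeff])
      rw [hPd] at this
      exact_mod_cast this
  have hinj : Set.InjOn x ↑(Finset.univ : Finset (Fin N)) := fun a _ b _ h => hx h
  have hI := Lagrange.eq_interpolate (f := P - Q) hinj (by exact_mod_cast hdeg)
  have hE := congrArg (Polynomial.eval Z) hI
  rw [Lagrange.interpolate_apply, Polynomial.eval_finset_sum] at hE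
  have hPe : ∀ w : ℂ, P.eval w = ∏ a, (w - l a) := by
    intro w; rw [hP, Polynomial.eval_prod]; simp
  have hQe : ∀ w : ℂ, Q.eval w = ∏ a, (w - x a) := by
    intro w; rw [hQ, Polynomial.eval_prod]; simp
  rw [Polynomial.eval_sub, hPe, hQe] at hE
  rw [hE]
  apply Finset.sum_congr rfl
  intro k _
  rw [Polynomial.eval_mul, Polynomial.eval_C, Polynomial.eval_sub, hPe, hQe]
  have hQk : (∏ a, (x k - x a)) = 0 :=
    Finset.prod_eq_zero (Finset.mem_univ k) (sub_self _)
  rw [hQk, sub_zero]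
  congr 1
  rw [Lagrange.basis, Polynomial.eval_prod]
  apply Finset.prod_congr rfl
  intro a _
  rw [Lagrange.basisDivisor]
  simp [div_eq_mul_inv, mul_comm]

lemma lemA1 {N : ℕ} (x l : Fin N → ℂ) (hx : Function.Injective x) (Z : ℂ)
    (hZ : ∀ k, Z - x k ≠ 0) :
    ∑ k, (∏ a, (x k - l a)) / (∏ a ∈ Finset.univ.erase k, (x k - x a)) / (Z - x k) =
      (∏ a, (Z - l a)) / (∏ a, (Z - x a)) - 1 := by
  classical
  have hQk : ∀ k : Fin N, (∏ a ∈ Finset.univ.erase k, (x k - x a)) ≠ 0 := by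
    intro k
    apply Finset.prod_ne_zero_iff.mpr
    intro a ha
    exact sub_ne_zero.mpr (hx.ne (Finset.mem_erase.mp ha).1.symm)
  have hD : (∏ a, (Z - x a)) ≠ 0 := Finset.prod_ne_zero_iff.mpr fun a _ => hZ a
  have h0 := lemA0 x l hx Z
  have key : ∀ k : Fin N,
      (∏ a, (x k - l a)) / (∏ a ∈ Finset.univ.erase k, (x k - x a)) / (Z - x k) =
      ((∏ a, (x k - l a)) * ∏ a ∈ Finset.univ.erase k, ((Z - x a) / (x k - x a))) /
        ∏ a, (Z - x a) := by
    intro k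
    have hE : (∏ a ∈ Finset.univ.erase k, (Z - x a)) ≠ 0 :=
      Finset.prod_ne_zero_iff.mpr fun a _ => hZ a
    rw [Finset.prod_div_distrib,
      ← Finset.mul_prod_erase Finset.univ (fun a => Z - x a) (Finset.mem_univ k),
      div_div, ← mul_div_assoc, div_div,
      div_eq_div_iff (mul_ne_zero (hQk k) (hZ k))
        (mul_ne_zero (hQk k) (mul_ne_zero (hZ k) hE))]
    ring
  simp_rw [key, ← Finset.sum_div, h0, sub_div, div_self hD]

lemma lemA2 {N : ℕ} (x l : Fin N → ℂ) (hx : Function.Injective x) (Z H : ℂ)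
    (hH : H ≠ 0) (hZ1 : ∀ k, Z - x k ≠ 0) (hZ2 : ∀ k, Z - H * x k ≠ 0) :
    ∑ k, (∏ a, (x k - l a)) / (∏ a ∈ Finset.univ.erase k, (x k - x a)) *
        (Z * (H - 1) / ((Z - x k) * (Z - H * x k))) =
      (∏ a, (Z - H * l a)) / (∏ a, (Z - H * x a)) -
        (∏ a, (Z - l a)) / (∏ a, (Z - x a)) := by
  classical
  have h1 := lemA1 x l hx Z hZ1
  have hZH : ∀ k, Z / H - x k ≠ 0 := by
    intro k
    have h : Z / H - x k = (Z - H * x k) / H := by field_simp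
    rw [h]
    exact div_ne_zero (hZ2 k) hH
  have h2 := lemA1 x l hx (Z / H) hZH
  have e1 : (∏ a, (Z / H - l a)) = (∏ a, (Z - H * l a)) / H ^ N := by
    have h : ∀ a : Fin N, Z / H - l a = (Z - H * l a) / H := fun a => by field_simp
    rw [Finset.prod_congr rfl fun a _ => h a, Finset.prod_div_distrib, Finset.prod_const]
    simp
  have e2 : (∏ a, (Z / H - x a)) = (∏ a, (Z - H * x a)) / H ^ N := by
    have h : ∀ a : Fin N, Z / H - x a = (Z - H * x a) / H := fun a => by field_simp
    rw [Finset.prod_congr rfl fun a _ => h a, Finset.prod_div_distrib, Finset.prod_const]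
    simp
  have hDH : (∏ a, (Z - H * x a)) ≠ 0 := Finset.prod_ne_zero_iff.mpr fun a _ => hZ2 a
  have e3 : (∏ a, (Z / H - l a)) / (∏ a, (Z / H - x a)) =
      (∏ a, (Z - H * l a)) / (∏ a, (Z - H * x a)) := by
    rw [e1, e2]
    have hHN : (H : ℂ) ^ N ≠ 0 := pow_ne_zero _ hH
    field_simp
  have hker : ∀ k : Fin N,
      (∏ a, (x k - l a)) / (∏ a ∈ Finset.univ.erase k, (x k - x a)) *
        (Z * (H - 1) / ((Z - x k) * (Z - H * x k))) =
      (∏ a, (x k - l a)) / (∏ a ∈ Finset.univ.erase k, (x k - x a)) / (Z / H - x k) -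
        (∏ a, (x k - l a)) / (∏ a ∈ Finset.univ.erase k, (x k - x a)) / (Z - x k) := by
    intro k
    have hk : Z * (H - 1) / ((Z - x k) * (Z - H * x k)) =
        1 / (Z / H - x k) - 1 / (Z - x k) := by
      rw [div_sub_div _ _ (hZH k) (hZ1 k),
        div_eq_div_iff (mul_ne_zero (hZ1 k) (hZ2 k)) (mul_ne_zero (hZH k) (hZ1 k))]
      field_simp
      ring
    rw [div_eq_mul_one_div _ (Z / H - x k), div_eq_mul_one_div _ (Z - x k), hk, mul_sub]
  simp_rw [hker]
  rw [Finset.sum_sub_distrib, h1, h2, e3]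
  ring

lemma sinh_formula (u v : ℂ) :
    Complex.sinh (u - v) =
      (Complex.exp u * Complex.exp u - Complex.exp v * Complex.exp v) /
        (2 * Complex.exp u * Complex.exp v) := by
  have hs : Complex.sinh (u - v) = (Complex.exp (u - v) - Complex.exp (-(u - v))) / 2 := rfl
  rw [hs, neg_sub, Complex.exp_sub, Complex.exp_sub]
  field_simp [Complex.exp_ne_zero]

lemma sinh_single (e : ℂ) :
    Complex.sinh e = (Complex.exp e * Complex.exp e - 1) / (2 * Complex.exp e) := by
  have hs : Complex.sinh e = (Complex.exp e - Complex.exp (-e)) / 2 := rfl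
  rw [hs, Complex.exp_neg]
  field_simp [Complex.exp_ne_zero]

lemma sinh_ne_zero_aux {u v : ℂ} (h : Complex.sinh (u - v) ≠ 0) :
    Complex.exp u * Complex.exp u - Complex.exp v * Complex.exp v ≠ 0 := by
  intro h0
  exact h (by rw [sinh_formula, h0, zero_div])

lemma div_div_div_eq' (a b c d : ℂ) (hb : b ≠ 0) (hc : c ≠ 0) (hd : d ≠ 0) :
    (a / b) / (c / d) = (a * d) / (b * c) := by
  field_simp

set_option maxHeartbeats 1600000 in
lemma lemB {N : ℕ} (mu lam : Fin N → ℂ) (z e : ℂ)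
    (hmu : ∀ a b : Fin N, a ≠ b → Complex.sinh (mu a - mu b) ≠ 0)
    (hz1 : ∀ k, Complex.sinh (mu k - z) ≠ 0)
    (hz2 : ∀ k, Complex.sinh (mu k - z + e) ≠ 0) :
    ∑ k, ((∏ a, Complex.sinh (mu k - lam a)) /
          ∏ a ∈ Finset.univ.erase k, Complex.sinh (mu k - mu a)) *
        (Complex.sinh e / (Complex.sinh (mu k - z) * Complex.sinh (mu k - z + e))) =
      (∏ a, Complex.sinh (lam a - z + e)) / (∏ a, Complex.sinh (mu a - z + e)) -
        (∏ a, Complex.sinh (lam a - z)) / (∏ a, Complex.sinh (mu a - z)) := by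
  classical
  have hq0 : Complex.exp e ≠ 0 := Complex.exp_ne_zero e
  have hζ0 : Complex.exp z ≠ 0 := Complex.exp_ne_zero z
  have hEx0 : ∀ k : Fin N, Complex.exp (mu k) ≠ 0 := fun k => Complex.exp_ne_zero _
  have hEl0 : ∀ a : Fin N, Complex.exp (lam a) ≠ 0 := fun a => Complex.exp_ne_zero _
  have hXinj : Function.Injective
      (fun k : Fin N => Complex.exp (mu k) * Complex.exp (mu k)) := by
    intro a b hab
    by_contra hne
    exact sinh_ne_zero_aux (hmu a b hne) (sub_eq_zero_of_eq hab)
  have hZ1' : ∀ k : Fin N,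
      Complex.exp z * Complex.exp z -
        Complex.exp (mu k) * Complex.exp (mu k) ≠ 0 := by
    intro k
    have h := sinh_ne_zero_aux (hz1 k)
    intro h0
    exact h (by linear_combination -h0)
  have hz2' : ∀ k : Fin N, Complex.sinh ((mu k + e) - z) ≠ 0 := by
    intro k
    rw [show (mu k + e) - z = mu k - z + e by ring]
    exact hz2 k
  have hZ2' : ∀ k : Fin N,
      Complex.exp z * Complex.exp z -
        Complex.exp e * Complex.exp e *
          (Complex.exp (mu k) * Complex.exp (mu k)) ≠ 0 := by
    intro k
    have h := sinh_ne_zero_aux (hz2' k)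
    rw [Complex.exp_add] at h
    intro h0
    exact h (by linear_combination -h0)
  have hQk0 : ∀ k : Fin N, (∏ a ∈ Finset.univ.erase k,
      (Complex.exp (mu k) * Complex.exp (mu k) -
        Complex.exp (mu a) * Complex.exp (mu a))) ≠ 0 := by
    intro k
    apply Finset.prod_ne_zero_iff.mpr
    intro a ha
    exact sinh_ne_zero_aux (hmu k a (Finset.mem_erase.mp ha).1.symm)
  have hA2 : ∑ k : Fin N,
      (∏ a, (Complex.exp (mu k) * Complex.exp (mu k) -
          Complex.exp (lam a) * Complex.exp (lam a))) /
        (∏ a ∈ Finset.univ.erase k,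
          (Complex.exp (mu k) * Complex.exp (mu k) -
            Complex.exp (mu a) * Complex.exp (mu a))) *
        (Complex.exp z * Complex.exp z * (Complex.exp e * Complex.exp e - 1) /
          ((Complex.exp z * Complex.exp z -
              Complex.exp (mu k) * Complex.exp (mu k)) *
            (Complex.exp z * Complex.exp z -
              Complex.exp e * Complex.exp e *
                (Complex.exp (mu k) * Complex.exp (mu k))))) =
      (∏ a, (Complex.exp z * Complex.exp z -
          Complex.exp e * Complex.exp e *
            (Complex.exp (lam a) * Complex.exp (lam a)))) /
        (∏ a, (Complex.exp z * Complex.exp z -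
          Complex.exp e * Complex.exp e *
            (Complex.exp (mu a) * Complex.exp (mu a)))) -
      (∏ a, (Complex.exp z * Complex.exp z -
          Complex.exp (lam a) * Complex.exp (lam a))) /
        (∏ a, (Complex.exp z * Complex.exp z -
          Complex.exp (mu a) * Complex.exp (mu a))) :=
    lemA2 _ _ hXinj _ _ (mul_ne_zero hq0 hq0) hZ1' hZ2'
  have hElP : (∏ a, Complex.exp (lam a)) ≠ 0 :=
    Finset.prod_ne_zero_iff.mpr fun a _ => hEl0 a
  have hExP : (∏ a, Complex.exp (mu a)) ≠ 0 :=
    Finset.prod_ne_zero_iff.mpr fun a _ => hEx0 a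
  have perk : ∀ k ∈ (Finset.univ : Finset (Fin N)),
      ((∏ a, Complex.sinh (mu k - lam a)) /
          ∏ a ∈ Finset.univ.erase k, Complex.sinh (mu k - mu a)) *
        (Complex.sinh e / (Complex.sinh (mu k - z) * Complex.sinh (mu k - z + e))) =
      ((∏ a, Complex.exp (mu a)) / (∏ a, Complex.exp (lam a))) *
        ((∏ a, (Complex.exp (mu k) * Complex.exp (mu k) -
            Complex.exp (lam a) * Complex.exp (lam a))) /
          (∏ a ∈ Finset.univ.erase k,
            (Complex.exp (mu k) * Complex.exp (mu k) -
              Complex.exp (mu a) * Complex.exp (mu a))) *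
          (Complex.exp z * Complex.exp z * (Complex.exp e * Complex.exp e - 1) /
            ((Complex.exp z * Complex.exp z -
                Complex.exp (mu k) * Complex.exp (mu k)) *
              (Complex.exp z * Complex.exp z -
                Complex.exp e * Complex.exp e *
                  (Complex.exp (mu k) * Complex.exp (mu k)))))) := by
    intro k _
    have e1 : ∏ a, Complex.sinh (mu k - lam a) =
        (∏ a, (Complex.exp (mu k) * Complex.exp (mu k) -
            Complex.exp (lam a) * Complex.exp (lam a))) /
          ((2 * Complex.exp (mu k)) ^ N * ∏ a, Complex.exp (lam a)) := by
      rw [Finset.prod_congr rfl fun a _ => sinh_formula (mu k) (lam a),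
        Finset.prod_div_distrib, Finset.prod_mul_distrib, Finset.prod_const,
        Finset.card_univ, Fintype.card_fin]
    have e2 : ∏ a ∈ Finset.univ.erase k, Complex.sinh (mu k - mu a) =
        (∏ a ∈ Finset.univ.erase k,
          (Complex.exp (mu k) * Complex.exp (mu k) -
            Complex.exp (mu a) * Complex.exp (mu a))) /
          ((2 * Complex.exp (mu k)) ^ (N - 1) *
            ∏ a ∈ Finset.univ.erase k, Complex.exp (mu a)) := by
      rw [Finset.prod_congr rfl fun a _ => sinh_formula (mu k) (mu a),
        Finset.prod_div_distrib, Finset.prod_mul_distrib, Finset.prod_const,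
        Finset.card_erase_of_mem (Finset.mem_univ k), Finset.card_univ, Fintype.card_fin]
    have e4 : Complex.sinh (mu k - z + e) =
        (Complex.exp e * Complex.exp e *
            (Complex.exp (mu k) * Complex.exp (mu k)) -
          Complex.exp z * Complex.exp z) /
          (2 * (Complex.exp (mu k) * Complex.exp e) * Complex.exp z) := by
      rw [show mu k - z + e = (mu k + e) - z by ring, sinh_formula, Complex.exp_add]
      ring
    have hK1 : Complex.exp (mu k) * Complex.exp (mu k) -
        Complex.exp z * Complex.exp z ≠ 0 := sinh_ne_zero_aux (hz1 k)
    have hK2 : Complex.exp e * Complex.exp e *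
        (Complex.exp (mu k) * Complex.exp (mu k)) -
        Complex.exp z * Complex.exp z ≠ 0 := by
      intro h0
      exact hZ2' k (by linear_combination -h0)
    have hExEr : (∏ a ∈ Finset.univ.erase k, Complex.exp (mu a)) ≠ 0 :=
      Finset.prod_ne_zero_iff.mpr fun a _ => hEx0 a
    have hpow : ((2 : ℂ) * Complex.exp (mu k)) ^ (N - 1) ≠ 0 :=
      pow_ne_zero _ (mul_ne_zero two_ne_zero (hEx0 k))
    have hJ1 := hZ1' k
    have hJ2 := hZ2' k
    have hB0 := hQk0 k
    have e3 := sinh_formula (mu k) z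
    have e5 := sinh_single e
    set u := Complex.exp (mu k) with hu
    have hu0 : u ≠ 0 := hEx0 k
    set qe := Complex.exp e with hqe
    set ze := Complex.exp z with hze
    set A := ∏ a, (u * u - Complex.exp (lam a) * Complex.exp (lam a)) with hA
    set B := ∏ a ∈ Finset.univ.erase k,
      (u * u - Complex.exp (mu a) * Complex.exp (mu a)) with hB
    set C := ∏ a, Complex.exp (lam a) with hC
    set D := ∏ a ∈ Finset.univ.erase k, Complex.exp (mu a) with hD
    have hG : ((2 : ℂ) * u) ^ N = (2 * u) ^ (N - 1) * (2 * u) := by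
      have hN1 : N - 1 + 1 = N := Nat.succ_pred_eq_of_pos k.pos
      rw [← pow_succ, hN1]
    set W := (2 * u) ^ (N - 1) with hW
    have hpow : W ≠ 0 := pow_ne_zero _ (mul_ne_zero two_ne_zero hu0)
    have hPmu : ∏ a, Complex.exp (mu a) = u * D :=
      (Finset.mul_prod_erase Finset.univ (fun a => Complex.exp (mu a))
        (Finset.mem_univ k)).symm
    clear_value u qe ze A B C D W
    have h2u : (2 : ℂ) * u ≠ 0 := mul_ne_zero two_ne_zero hu0
    have eV : (∏ a, Complex.sinh (mu k - lam a)) /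
        (∏ a ∈ Finset.univ.erase k, Complex.sinh (mu k - mu a)) =
        (A * (W * D)) / ((W * (2 * u) * C) * B) := by
      rw [e1, e2, hG,
        div_div_div_eq' _ _ _ _ (mul_ne_zero (mul_ne_zero hpow h2u) hElP)
          hB0 (mul_ne_zero hpow hExEr)]
    have eK : Complex.sinh e /
        (Complex.sinh (mu k - z) * Complex.sinh (mu k - z + e)) =
        (2 * (u * u) * (ze * ze) * (qe * qe - 1)) /
          ((u * u - ze * ze) * (qe * qe * (u * u) - ze * ze)) := by
      have hb1 : (2 : ℂ) * qe ≠ 0 := mul_ne_zero two_ne_zero hq0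
      have hc1 : (u * u - ze * ze) * (qe * qe * (u * u) - ze * ze) ≠ 0 :=
        mul_ne_zero hK1 hK2
      have hd1 : (2 * u * ze) * (2 * (u * qe) * ze) ≠ 0 :=
        mul_ne_zero (mul_ne_zero (mul_ne_zero two_ne_zero hu0) hζ0)
          (mul_ne_zero (mul_ne_zero two_ne_zero (mul_ne_zero hu0 hq0)) hζ0)
      rw [e3, e4, e5, div_mul_div_comm, div_div_div_eq' _ _ _ _ hb1 hc1 hd1]
      rw [div_eq_div_iff (mul_ne_zero hb1 hc1) hc1]
      ring
    have hdL : (W * (2 * u) * C) * B * ((u * u - ze * ze) *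
        (qe * qe * (u * u) - ze * ze)) ≠ 0 :=
      mul_ne_zero (mul_ne_zero (mul_ne_zero (mul_ne_zero hpow h2u) hElP) hB0)
        (mul_ne_zero hK1 hK2)
    have hdR : C * (B * ((ze * ze - u * u) *
        (ze * ze - qe * qe * (u * u)))) ≠ 0 :=
      mul_ne_zero hElP (mul_ne_zero hB0 (mul_ne_zero hJ1 hJ2))
    rw [eV, eK, hPmu, div_mul_div_comm, div_mul_div_comm, div_mul_div_comm]
    rw [div_eq_div_iff hdL hdR]
    ring
  have r1 : ∏ a, Complex.sinh (lam a - z + e) =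
      ((-1 : ℂ) ^ N * ∏ a, (Complex.exp z * Complex.exp z -
          Complex.exp e * Complex.exp e *
            (Complex.exp (lam a) * Complex.exp (lam a)))) /
        ((2 * Complex.exp e * Complex.exp z) ^ N * ∏ a, Complex.exp (lam a)) := by
    have h : ∀ a : Fin N, Complex.sinh (lam a - z + e) =
        (-1 : ℂ) * (Complex.exp z * Complex.exp z -
          Complex.exp e * Complex.exp e *
            (Complex.exp (lam a) * Complex.exp (lam a))) /
          (2 * Complex.exp e * Complex.exp z * Complex.exp (lam a)) := by
      intro a
      rw [show lam a - z + e = (lam a + e) - z by ring, sinh_formula, Complex.exp_add]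
      ring
    rw [Finset.prod_congr rfl fun a _ => h a]
    rw [Finset.prod_div_distrib, Finset.prod_mul_distrib, Finset.prod_mul_distrib,
      Finset.prod_const, Finset.prod_const, Finset.card_univ, Fintype.card_fin]
  have r2 : ∏ a, Complex.sinh (mu a - z + e) =
      ((-1 : ℂ) ^ N * ∏ a, (Complex.exp z * Complex.exp z -
          Complex.exp e * Complex.exp e *
            (Complex.exp (mu a) * Complex.exp (mu a)))) /
        ((2 * Complex.exp e * Complex.exp z) ^ N * ∏ a, Complex.exp (mu a)) := by
    have h : ∀ a : Fin N, Complex.sinh (mu a - z + e) =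
        (-1 : ℂ) * (Complex.exp z * Complex.exp z -
          Complex.exp e * Complex.exp e *
            (Complex.exp (mu a) * Complex.exp (mu a))) /
          (2 * Complex.exp e * Complex.exp z * Complex.exp (mu a)) := by
      intro a
      rw [show mu a - z + e = (mu a + e) - z by ring, sinh_formula, Complex.exp_add]
      ring
    rw [Finset.prod_congr rfl fun a _ => h a]
    rw [Finset.prod_div_distrib, Finset.prod_mul_distrib, Finset.prod_mul_distrib,
      Finset.prod_const, Finset.prod_const, Finset.card_univ, Fintype.card_fin]
  have r3 : ∏ a, Complex.sinh (lam a - z) =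
      ((-1 : ℂ) ^ N * ∏ a, (Complex.exp z * Complex.exp z -
          Complex.exp (lam a) * Complex.exp (lam a))) /
        ((2 * Complex.exp z) ^ N * ∏ a, Complex.exp (lam a)) := by
    have h : ∀ a : Fin N, Complex.sinh (lam a - z) =
        (-1 : ℂ) * (Complex.exp z * Complex.exp z -
          Complex.exp (lam a) * Complex.exp (lam a)) /
          (2 * Complex.exp z * Complex.exp (lam a)) := by
      intro a
      rw [sinh_formula]
      ring
    rw [Finset.prod_congr rfl fun a _ => h a]
    rw [Finset.prod_div_distrib, Finset.prod_mul_distrib, Finset.prod_mul_distrib,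
      Finset.prod_const, Finset.prod_const, Finset.card_univ, Fintype.card_fin]
  have r4 : ∏ a, Complex.sinh (mu a - z) =
      ((-1 : ℂ) ^ N * ∏ a, (Complex.exp z * Complex.exp z -
          Complex.exp (mu a) * Complex.exp (mu a))) /
        ((2 * Complex.exp z) ^ N * ∏ a, Complex.exp (mu a)) := by
    have h : ∀ a : Fin N, Complex.sinh (mu a - z) =
        (-1 : ℂ) * (Complex.exp z * Complex.exp z -
          Complex.exp (mu a) * Complex.exp (mu a)) /
          (2 * Complex.exp z * Complex.exp (mu a)) := by
      intro a
      rw [sinh_formula]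
      ring
    rw [Finset.prod_congr rfl fun a _ => h a]
    rw [Finset.prod_div_distrib, Finset.prod_mul_distrib, Finset.prod_mul_distrib,
      Finset.prod_const, Finset.prod_const, Finset.card_univ, Fintype.card_fin]
  have hBq : (∏ a, (Complex.exp z * Complex.exp z -
      Complex.exp e * Complex.exp e *
        (Complex.exp (mu a) * Complex.exp (mu a)))) ≠ 0 :=
    Finset.prod_ne_zero_iff.mpr fun a _ => hZ2' a
  have hB1 : (∏ a, (Complex.exp z * Complex.exp z -
      Complex.exp (mu a) * Complex.exp (mu a))) ≠ 0 :=
    Finset.prod_ne_zero_iff.mpr fun a _ => hZ1' a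
  have hDq : ((2 : ℂ) * Complex.exp e * Complex.exp z) ^ N ≠ 0 :=
    pow_ne_zero _ (mul_ne_zero (mul_ne_zero two_ne_zero hq0) hζ0)
  have hD1 : ((2 : ℂ) * Complex.exp z) ^ N ≠ 0 :=
    pow_ne_zero _ (mul_ne_zero two_ne_zero hζ0)
  have hneg : ((-1 : ℂ)) ^ N ≠ 0 := pow_ne_zero _ (by norm_num)
  rw [Finset.sum_congr rfl perk, ← Finset.mul_sum, hA2, r1, r2, r3, r4]
  set Aq := ∏ a, (Complex.exp z * Complex.exp z -
      Complex.exp e * Complex.exp e *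
        (Complex.exp (lam a) * Complex.exp (lam a))) with hAq
  set Bq := ∏ a, (Complex.exp z * Complex.exp z -
      Complex.exp e * Complex.exp e *
        (Complex.exp (mu a) * Complex.exp (mu a))) with hBqd
  set A1 := ∏ a, (Complex.exp z * Complex.exp z -
      Complex.exp (lam a) * Complex.exp (lam a)) with hA1
  set B1 := ∏ a, (Complex.exp z * Complex.exp z -
      Complex.exp (mu a) * Complex.exp (mu a)) with hB1d
  set C := ∏ a, Complex.exp (lam a) with hC
  set D := ∏ a, Complex.exp (mu a) with hD
  set Dq := ((2 : ℂ) * Complex.exp e * Complex.exp z) ^ N with hDqd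
  set D1 := ((2 : ℂ) * Complex.exp z) ^ N with hD1d
  set ng := ((-1 : ℂ)) ^ N with hng
  clear_value Aq Bq A1 B1 C D Dq D1 ng
  field_simp [hBq, hB1, hDq, hD1, hneg, hElP, hExP]

/-- Linear combination of the rows of `Ω_κ({μ},{λ}|{μ})` with coefficients `v_k` gives
`Y_κ(λ_j|{λ})`; in particular, on a solution of the (untwisted) Bethe equations it gives
`(1-κ) a(λ_j) ∏_a sinh(λ_a - λ_j + η)`. -/
theorem Omega_row_combination (M N : ℕ) (hN : 1 ≤ N) (η : ℂ) (ξ : Fin M → ℂ) (κ : ℂ)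
    (mu lam : Fin N → ℂ)
    (hmu : ∀ a b : Fin N, a ≠ b → Complex.sinh (mu a - mu b) ≠ 0)
    (h1 : ∀ j k : Fin N, Complex.sinh (mu k - lam j) ≠ 0)
    (h2 : ∀ j k : Fin N, Complex.sinh (mu k - lam j + η) ≠ 0)
    (h3 : ∀ j k : Fin N, Complex.sinh (lam j - mu k + η) ≠ 0) :
    let v : Fin N → ℂ := fun k =>
      (∏ a, Complex.sinh (mu k - lam a)) /
        ∏ a ∈ Finset.univ.erase k, Complex.sinh (mu k - mu a)
    (∀ j : Fin N, ∑ k : Fin N, v k * Omega M η ξ κ mu lam mu k j = Yk M η ξ κ lam (lam j)) ∧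
      ((∀ j : Fin N, Yk M η ξ 1 lam (lam j) = 0) →
        ∀ j : Fin N, ∑ k : Fin N, v k * Omega M η ξ κ mu lam mu k j =
          (1 - κ) * aF M η ξ (lam j) * ∏ a, Complex.sinh (lam a - lam j + η)) := by
  intro v
  have hv : ∀ k : Fin N, v k = (∏ a, Complex.sinh (mu k - lam a)) /
      ∏ a ∈ Finset.univ.erase k, Complex.sinh (mu k - mu a) := fun k => rfl
  have hmain : ∀ j : Fin N, ∑ k : Fin N, v k * Omega M η ξ κ mu lam mu k j =
      Yk M η ξ κ lam (lam j) := by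
    intro j
    have hm2 : ∀ k : Fin N, Complex.sinh (mu k - lam j + -η) ≠ 0 := by
      intro k
      rw [show mu k - lam j + -η = -(lam j - mu k + η) by ring, Complex.sinh_neg]
      exact neg_ne_zero.mpr (h3 j k)
    have hD1 : (∏ a, Complex.sinh (mu a - lam j + η)) ≠ 0 :=
      Finset.prod_ne_zero_iff.mpr fun a _ => h2 j a
    have hD2 : (∏ a, Complex.sinh (mu a - lam j - η)) ≠ 0 := by
      apply Finset.prod_ne_zero_iff.mpr
      intro a _
      rw [show mu a - lam j - η = -(lam j - mu a + η) by ring, Complex.sinh_neg]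
      exact neg_ne_zero.mpr (h3 j a)
    have hzero : (∏ a, Complex.sinh (lam a - lam j)) = 0 :=
      Finset.prod_eq_zero (Finset.mem_univ j) (by simp)
    have hB1 := lemB mu lam (lam j) η hmu (fun k => h1 j k) (fun k => h2 j k)
    have hB2 := lemB mu lam (lam j) (-η) hmu (fun k => h1 j k) hm2
    rw [hzero, zero_div, sub_zero] at hB1 hB2
    have harg : ∀ w : ℂ, w + -η = w - η := fun w => (sub_eq_add_neg w η).symm
    simp only [harg] at hB2
    have key : ∑ k : Fin N, v k * Omega M η ξ κ mu lam mu k j =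
        (aF M η ξ (lam j) * ∏ a, Complex.sinh (mu a - lam j + η)) *
          (∑ k : Fin N, ((∏ a, Complex.sinh (mu k - lam a)) /
              ∏ a ∈ Finset.univ.erase k, Complex.sinh (mu k - mu a)) *
            (Complex.sinh η /
              (Complex.sinh (mu k - lam j) * Complex.sinh (mu k - lam j + η)))) +
        (κ * dF M ξ (lam j) * ∏ a, Complex.sinh (mu a - lam j - η)) *
          (∑ k : Fin N, ((∏ a, Complex.sinh (mu k - lam a)) /
              ∏ a ∈ Finset.univ.erase k, Complex.sinh (mu k - mu a)) *
            (Complex.sinh (-η) /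
              (Complex.sinh (mu k - lam j) * Complex.sinh (mu k - lam j - η)))) := by
      rw [Finset.mul_sum, Finset.mul_sum, ← Finset.sum_add_distrib]
      apply Finset.sum_congr rfl
      intro k _
      rw [hv k]
      simp only [Omega, tfun]
      rw [show lam j - mu k = -(mu k - lam j) by ring,
        show -(mu k - lam j) + η = -(mu k - lam j - η) by ring]
      simp only [Complex.sinh_neg]
      ring
    rw [key, hB1, hB2]
    simp only [Yk]
    field_simp
  refine ⟨hmain, ?_⟩
  intro hb j
  rw [hmain j]
  have h0 := hb j
  simp only [Yk] at h0 ⊢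
  linear_combination κ * h0

end
end
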